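/- Let w ∈ ℝ^n with w_i > 0 for all i, let p ∈ [0,1]^n, and let x ∈ (0, Σ_{i}(1 − p_i)]. Then there exists a threshold y > 0 such that the vector δ defined by δ_i = min{1, max{p_i, w_i/y}} − p_i satisfies Σ_i δ_i = x, and δ is the unique minimizer of Σ_i w_i²/(p_i + δ_i) over all δ ∈ ℝ^n satisfying 0 ≤ δ_i ≤ 1 − p_i for every i and Σ_i δ_i = x. -/
import Mathlib


lemma bi_real_core {n : ℕ} (w q r : Fin n → ℝ) (y : ℝ)
    (hw : ∀ i, 0 < w i) (hq : ∀ i, 0 < q i) (hr : ∀ i, 0 < r i)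
    (hsum : ∑ i, r i = ∑ i, q i)
    (hkkt : ∀ i, (r i - q i) * (w i ^ 2 / q i ^ 2) ≤ (r i - q i) * y ^ 2) :
    (∑ i, w i ^ 2 / q i) ≤ (∑ i, w i ^ 2 / r i) ∧
    ((∑ i, w i ^ 2 / r i) = (∑ i, w i ^ 2 / q i) → r = q) := by
  have hid : ∀ i, w i ^ 2 / r i =
      w i ^ 2 / q i - (r i - q i) * (w i ^ 2 / q i ^ 2)
        + w i ^ 2 * (r i - q i) ^ 2 / (r i * q i ^ 2) := by
    intro i
    have h1 := (hq i).ne'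
    have h2 := (hr i).ne'
    field_simp
    ring
  have hA : ∑ i, (r i - q i) * (w i ^ 2 / q i ^ 2) ≤ 0 := by
    calc ∑ i, (r i - q i) * (w i ^ 2 / q i ^ 2)
        ≤ ∑ i, (r i - q i) * y ^ 2 := Finset.sum_le_sum fun i _ => hkkt i
      _ = (∑ i, r i - ∑ i, q i) * y ^ 2 := by
          rw [← Finset.sum_mul, Finset.sum_sub_distrib]
      _ = 0 := by rw [hsum]; ring
  have hBnn : ∀ i ∈ Finset.univ, 0 ≤ w i ^ 2 * (r i - q i) ^ 2 / (r i * q i ^ 2) := by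
    intro i _
    have := hr i
    positivity
  have hB : 0 ≤ ∑ i, w i ^ 2 * (r i - q i) ^ 2 / (r i * q i ^ 2) :=
    Finset.sum_nonneg hBnn
  have hsum2 : ∑ i, w i ^ 2 / r i =
      ∑ i, w i ^ 2 / q i - (∑ i, (r i - q i) * (w i ^ 2 / q i ^ 2))
        + ∑ i, w i ^ 2 * (r i - q i) ^ 2 / (r i * q i ^ 2) := by
    rw [← Finset.sum_sub_distrib, ← Finset.sum_add_distrib]
    exact Finset.sum_congr rfl fun i _ => hid i
  constructor
  · linarith
  · intro heq
    have hB0 : ∑ i, w i ^ 2 * (r i - q i) ^ 2 / (r i * q i ^ 2) = 0 := by linarith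
    funext i
    have := (Finset.sum_eq_zero_iff_of_nonneg hBnn).mp hB0 i (Finset.mem_univ i)
    have h1 := hw i
    have h2 := hq i
    have h3 := hr i
    have h4 : (r i - q i) ^ 2 = 0 := by
      rcases div_eq_zero_iff.mp this with h | h
      · rcases mul_eq_zero.mp h with h | h
        · nlinarith
        · exact h
      · exact absurd h (by positivity)
    nlinarith [sq_nonneg (r i - q i)]

/-- **The most beneficial increase is a threshold solution.**
Let `w i > 0` for all `i`, `p ∈ [0,1]^n`, and `x ∈ (0, ∑ i (1 - p i)]`.  Then there is a
threshold `y > 0` such that `δ i = min 1 (max (p i) (w i / y)) - p i` sums to `x`, and `δ`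
is the unique minimizer of `∑ i, w i ^ 2 / (p i + δ i)` (valued in `ℝ≥0∞`, so that a zero
denominator yields `∞`) over all `δ` with `0 ≤ δ i ≤ 1 - p i` and `∑ i, δ i = x`. -/
theorem best_increase (n : ℕ) (w p : Fin n → ℝ) (hw : ∀ i, 0 < w i)
    (hp0 : ∀ i, 0 ≤ p i) (hp1 : ∀ i, p i ≤ 1)
    (x : ℝ) (hx0 : 0 < x) (hx1 : x ≤ ∑ i, (1 - p i)) :
    ∃ y : ℝ, 0 < y ∧
      (∑ i, (min 1 (max (p i) (w i / y)) - p i)) = x ∧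
      ∀ δ : Fin n → ℝ, (∀ i, 0 ≤ δ i ∧ δ i ≤ 1 - p i) → (∑ i, δ i = x) →
        (∑ i, ENNReal.ofReal (w i ^ 2) /
            ENNReal.ofReal (p i + (min 1 (max (p i) (w i / y)) - p i))) ≤
          (∑ i, ENNReal.ofReal (w i ^ 2) / ENNReal.ofReal (p i + δ i)) ∧
        ((∑ i, ENNReal.ofReal (w i ^ 2) / ENNReal.ofReal (p i + δ i)) =
            (∑ i, ENNReal.ofReal (w i ^ 2) /
              ENNReal.ofReal (p i + (min 1 (max (p i) (w i / y)) - p i))) →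
          δ = fun i => min 1 (max (p i) (w i / y)) - p i) := by
  -- n is positive
  rcases Nat.eq_zero_or_pos n with rfl | hn
  · simp at hx1; linarith
  haveI hne : Nonempty (Fin n) := Fin.pos_iff_nonempty.mp hn
  have huniv : (Finset.univ : Finset (Fin n)).Nonempty := Finset.univ_nonempty
  -- setup for IVT
  obtain ⟨y₀, hy₀pos, hy₀le⟩ : ∃ y₀ : ℝ, 0 < y₀ ∧ ∀ i, y₀ ≤ w i := by
    refine ⟨Finset.univ.inf' huniv w, ?_, fun i => Finset.inf'_le _ (Finset.mem_univ i)⟩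
    rw [Finset.lt_inf'_iff]
    exact fun i _ => hw i
  have hWpos : 0 < ∑ i, w i := Finset.sum_pos (fun i _ => hw i) huniv
  obtain ⟨y₁, hy01, hy₁pos, hy₁big⟩ :
      ∃ y₁ : ℝ, y₀ ≤ y₁ ∧ 0 < y₁ ∧ (∑ i, w i) / x < y₁ := by
    refine ⟨y₀ + (∑ i, w i) / x, ?_, ?_, ?_⟩
    · have : 0 < (∑ i, w i) / x := div_pos hWpos hx0
      linarith
    · have : 0 < (∑ i, w i) / x := div_pos hWpos hx0
      linarith
    · linarith
  have hcont : ContinuousOn (fun y => ∑ i, min 1 (max (p i) (w i / y)))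
      (Set.Icc y₀ y₁) := by
    apply continuousOn_finset_sum
    intro i _
    exact ContinuousOn.inf continuousOn_const
      (ContinuousOn.sup continuousOn_const
        (ContinuousOn.div continuousOn_const continuousOn_id
          (fun z hz => ne_of_gt (lt_of_lt_of_le hy₀pos hz.1))))
  have hf0 : ∑ i, min 1 (max (p i) (w i / y₀)) = (n : ℝ) := by
    have h1 : ∀ i ∈ Finset.univ, min 1 (max (p i) (w i / y₀)) = (1 : ℝ) := by
      intro i _
      have h1 : (1 : ℝ) ≤ w i / y₀ := (one_le_div hy₀pos).mpr (hy₀le i)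
      exact min_eq_left (le_max_of_le_right h1)
    rw [Finset.sum_congr rfl h1]
    simp
  have hf1 : ∑ i, min 1 (max (p i) (w i / y₁)) < (∑ i, p i) + x := by
    have hterm : ∀ i ∈ Finset.univ,
        min 1 (max (p i) (w i / y₁)) ≤ p i + w i / y₁ := by
      intro i _
      have hwy : 0 ≤ w i / y₁ := le_of_lt (div_pos (hw i) hy₁pos)
      exact le_trans (min_le_right _ _) (max_le (by linarith) (by linarith [hp0 i]))
    have h1 : ∑ i, min 1 (max (p i) (w i / y₁)) ≤ (∑ i, p i) + (∑ i, w i) / y₁ :=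
      calc ∑ i, min 1 (max (p i) (w i / y₁)) ≤ ∑ i, (p i + w i / y₁) :=
            Finset.sum_le_sum hterm
        _ = (∑ i, p i) + (∑ i, w i) / y₁ := by
            rw [Finset.sum_add_distrib, ← Finset.sum_div]
    have h2 : (∑ i, w i) / y₁ < x := by
      rw [div_lt_iff₀ hy₁pos]
      rw [div_lt_iff₀ hx0] at hy₁big
      linarith
    linarith
  have hmem : (∑ i, p i) + x ∈ Set.Icc (∑ i, min 1 (max (p i) (w i / y₁)))
      (∑ i, min 1 (max (p i) (w i / y₀))) := by
    have hsum1p : ∑ i, (1 - p i) = (n : ℝ) - ∑ i, p i := by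
      rw [Finset.sum_sub_distrib]
      simp
    constructor
    · linarith
    · rw [hf0]; linarith
  obtain ⟨y, hyIcc, hfy⟩ := intermediate_value_Icc' hy01 hcont hmem
  have hypos : 0 < y := lt_of_lt_of_le hy₀pos hyIcc.1
  have hqsum : ∑ i, min 1 (max (p i) (w i / y)) = (∑ i, p i) + x := hfy
  -- the threshold solution
  have hqpos : ∀ i, 0 < min 1 (max (p i) (w i / y)) := by
    intro i
    have : 0 < w i / y := div_pos (hw i) hypos
    exact lt_min one_pos (lt_max_of_lt_right this)
  have hsumδ : (∑ i, (min 1 (max (p i) (w i / y)) - p i)) = x := by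
    rw [Finset.sum_sub_distrib, hqsum]
    ring
  refine ⟨y, hypos, hsumδ, ?_⟩
  intro δ hδ hδsum
  set q : Fin n → ℝ := fun i => min 1 (max (p i) (w i / y)) with hqdef
  set r : Fin n → ℝ := fun i => p i + δ i with hrdef
  have hq_i : ∀ i, q i = min 1 (max (p i) (w i / y)) := fun i => rfl
  have hr_i : ∀ i, r i = p i + δ i := fun i => rfl
  have hrsum : ∑ i, r i = (∑ i, p i) + x := by
    rw [hrdef]
    rw [Finset.sum_add_distrib, hδsum]
  have hrnn : ∀ i, 0 ≤ r i := fun i => add_nonneg (hp0 i) (hδ i).1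
  have hrle1 : ∀ i, r i ≤ 1 := by
    intro i
    have h2 := (hδ i).2
    rw [hr_i i]
    linarith
  have hpq : ∀ i, p i + (min 1 (max (p i) (w i / y)) - p i) = q i := fun i => by
    rw [hq_i i]; ring
  -- rewrite LHS
  have hLHS : (∑ i, ENNReal.ofReal (w i ^ 2) /
      ENNReal.ofReal (p i + (min 1 (max (p i) (w i / y)) - p i))) =
      ENNReal.ofReal (∑ i, w i ^ 2 / q i) := by
    rw [ENNReal.ofReal_sum_of_nonneg
      (fun i _ => div_nonneg (by positivity) (hqpos i).le)]
    refine Finset.sum_congr rfl fun i _ => ?_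
    rw [hpq i]
    exact (ENNReal.ofReal_div_of_pos (hqpos i)).symm
  have hLHSfin : ENNReal.ofReal (∑ i, w i ^ 2 / q i) ≠ ⊤ := ENNReal.ofReal_ne_top
  rw [hLHS]
  by_cases hall : ∀ i, 0 < r i
  · -- all denominators positive
    have hRHS : (∑ i, ENNReal.ofReal (w i ^ 2) / ENNReal.ofReal (p i + δ i)) =
        ENNReal.ofReal (∑ i, w i ^ 2 / r i) := by
      rw [ENNReal.ofReal_sum_of_nonneg
        (fun i _ => div_nonneg (by positivity) (hall i).le)]
      exact Finset.sum_congr rfl fun i _ => (ENNReal.ofReal_div_of_pos (hall i)).symm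
    rw [hRHS]
    have hkkt : ∀ i, (r i - q i) * (w i ^ 2 / q i ^ 2) ≤ (r i - q i) * y ^ 2 := by
      intro i
      rcases le_total (w i / y) (p i) with h | h
      · -- q i = p i, r i ≥ q i, w i ≤ y * p i
        have hq_eq : q i = p i := by
          rw [hq_i i, max_eq_left h]
          exact min_eq_right (hp1 i)
        have hppos : 0 < p i := lt_of_lt_of_le (div_pos (hw i) hypos) h
        have hwle : w i ≤ p i * y := (div_le_iff₀ hypos).mp h
        have h0 : 0 ≤ r i - q i := by
          rw [hq_eq, hr_i i]
          linarith [(hδ i).1]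
        have hdivle : w i ^ 2 / q i ^ 2 ≤ y ^ 2 := by
          rw [hq_eq, div_le_iff₀ (by positivity)]
          nlinarith [hw i, hypos]
        exact mul_le_mul_of_nonneg_left hdivle h0
      · rcases le_total (w i / y) 1 with h1 | h1
        · -- q i = w i / y, exact equality
          have hq_eq : q i = w i / y := by
            rw [hq_i i, max_eq_right h]
            exact min_eq_right h1
          have heq2 : w i ^ 2 / q i ^ 2 = y ^ 2 := by
            rw [hq_eq, div_pow, div_div_eq_mul_div,
              mul_div_cancel_left₀ _ (pow_ne_zero 2 (hw i).ne')]
          rw [heq2]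
        · -- q i = 1, r i ≤ 1, w i ≥ y
          have hq_eq : q i = 1 := by
            rw [hq_i i]
            exact min_eq_left (le_max_of_le_right h1)
          have hwge : y ≤ w i := (one_le_div hypos).mp h1
          have h0 : r i - q i ≤ 0 := by rw [hq_eq]; linarith [hrle1 i]
          have hdivge : y ^ 2 ≤ w i ^ 2 / q i ^ 2 := by
            rw [hq_eq]
            simp only [one_pow, div_one]
            nlinarith [hypos]
          exact mul_le_mul_of_nonpos_left hdivge h0
    obtain ⟨hineq, hequniq⟩ := bi_real_core w q r y hw hqpos hall
      (by rw [hrsum]; exact hqsum.symm) hkkt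
    constructor
    · exact ENNReal.ofReal_le_ofReal hineq
    · intro heq
      have hreal : (∑ i, w i ^ 2 / r i) = ∑ i, w i ^ 2 / q i := by
        have h1 : 0 ≤ ∑ i, w i ^ 2 / q i :=
          Finset.sum_nonneg fun i _ => div_nonneg (by positivity) (hqpos i).le
        have h2 : 0 ≤ ∑ i, w i ^ 2 / r i :=
          Finset.sum_nonneg fun i _ => div_nonneg (by positivity) (hall i).le
        rw [ENNReal.ofReal_eq_ofReal_iff h2 h1] at heq
        exact heq
      have hrq := hequniq hreal
      funext i
      have hri : r i = q i := congrFun hrq i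
      rw [hr_i i, hq_i i] at hri
      linarith [hri]
  · -- some denominator is zero: RHS = ⊤
    push_neg at hall
    obtain ⟨i, hi⟩ := hall
    have hri : r i = 0 := le_antisymm hi (hrnn i)
    have hterm : ENNReal.ofReal (w i ^ 2) / ENNReal.ofReal (p i + δ i) = ⊤ := by
      have hz : ENNReal.ofReal (p i + δ i) = 0 := by
        rw [← hr_i i, hri]
        exact ENNReal.ofReal_zero
      rw [hz, ENNReal.div_zero]
      exact (ENNReal.ofReal_pos.mpr (pow_pos (hw i) 2)).ne'
    have hRHStop : (∑ i, ENNReal.ofReal (w i ^ 2) / ENNReal.ofReal (p i + δ i)) = ⊤ :=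
      ENNReal.sum_eq_top.mpr ⟨i, Finset.mem_univ i, hterm⟩
    constructor
    · rw [hRHStop]; exact le_top
    · intro heq
      rw [hRHStop] at heq
      exact absurd heq.symm hLHSfin
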